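/- Let H be a Borel probability measure on ℝ, let n ≥ 1, and let ε > 0. Then there exist x, x' ∈ ℝⁿ differing in exactly one coordinate such that ∫_ℝ |F̂_x(t) − F̂_{x'}(t)| dH(t) ≥ 1/n − ε. Consequently, the base sensitivity of the weighted Wasserstein distance d_W^H equals 1/n. -/

import Mathlib

open MeasureTheory Filter

/-- Empirical cdf of a sample `x : Fin n → ℝ`. -/
noncomputable def ecdf {n : ℕ} (x : Fin n → ℝ) (t : ℝ) : ℝ :=
  (Finset.univ.filter (fun i => x i ≤ t)).card / n

/-- Weighted Wasserstein distance with base measure `H`. -/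
noncomputable def dW (H : Measure ℝ) (F G : ℝ → ℝ) : ℝ :=
  ∫ t, |F t - G t| ∂H

lemma abs_ecdf_sub_le {n : ℕ} (x x' : Fin n → ℝ) (h : hammingDist x x' ≤ 1)
    (t : ℝ) : |ecdf x t - ecdf x' t| ≤ 1 / n := by
  classical
  set A := Finset.univ.filter (fun i => x i ≤ t) with hA
  set B := Finset.univ.filter (fun i => x' i ≤ t) with hB
  set D := Finset.univ.filter (fun i => x i ≠ x' i) with hD
  have hDcard : D.card ≤ 1 := h
  have hsub : ∀ (u v : Fin n → ℝ), (∀ i, u i = v i ∨ i ∈ D) →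
      (Finset.univ.filter (fun i => u i ≤ t)).card ≤
      (Finset.univ.filter (fun i => v i ≤ t)).card + 1 := by
    intro u v hmem
    have : (Finset.univ.filter (fun i => u i ≤ t)) ⊆
        (Finset.univ.filter (fun i => v i ≤ t)) ∪ D := by
      intro i hi
      simp only [Finset.mem_filter, Finset.mem_univ, true_and] at hi
      rcases hmem i with he | hd
      · exact Finset.mem_union_left _ (by simp [he ▸ hi])
      · exact Finset.mem_union_right _ hd
    calc (Finset.univ.filter (fun i => u i ≤ t)).card
        ≤ ((Finset.univ.filter (fun i => v i ≤ t)) ∪ D).card := Finset.card_le_card this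
      _ ≤ (Finset.univ.filter (fun i => v i ≤ t)).card + D.card := Finset.card_union_le _ _
      _ ≤ _ := by omega
  have h1 : A.card ≤ B.card + 1 := hsub x x' (fun i => by
    by_cases hx : x i = x' i
    · exact Or.inl hx
    · exact Or.inr (by simp [hD, hx]))
  have h2 : B.card ≤ A.card + 1 := hsub x' x (fun i => by
    by_cases hx : x i = x' i
    · exact Or.inl hx.symm
    · exact Or.inr (by simp [hD, hx]))
  rcases Nat.eq_zero_or_pos n with h0 | h0
  · subst h0; simp [ecdf]
  have hn : (0:ℝ) < n := by exact_mod_cast h0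
  have h1' : (A.card:ℝ) ≤ (B.card:ℝ) + 1 := by exact_mod_cast h1
  have h2' : (B.card:ℝ) ≤ (A.card:ℝ) + 1 := by exact_mod_cast h2
  have hABs : |(A.card : ℝ) - B.card| ≤ 1 := by
    rw [abs_le]; constructor <;> linarith
  show |(A.card : ℝ)/n - (B.card : ℝ)/n| ≤ 1/n
  rw [div_sub_div_same, abs_div, abs_of_pos hn]
  gcongr

theorem wasserstein_base_sensitivity_eq {n : ℕ} (hn : 1 ≤ n)
    (H : Measure ℝ) [IsProbabilityMeasure H] (ε : ℝ) (hε : 0 < ε) :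
    (∃ x x' : Fin n → ℝ, hammingDist x x' = 1 ∧
      ∫ t, |ecdf x t - ecdf x' t| ∂H ≥ 1 / (n : ℝ) - ε) ∧
    sSup {d : ℝ | ∃ x x' : Fin n → ℝ, hammingDist x x' ≤ 1 ∧
      d = dW H (ecdf x) (ecdf x')} = 1 / n := by
  classical
  have hnR : (0:ℝ) < n := by exact_mod_cast hn
  -- the lower-bound construction, for an arbitrary ε' > 0
  have main : ∀ ε' : ℝ, 0 < ε' → ∃ x x' : Fin n → ℝ, hammingDist x x' = 1 ∧
      ∫ t, |ecdf x t - ecdf x' t| ∂H ≥ 1 / (n : ℝ) - ε' := by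
    intro ε' hε'
    -- find k with H (Ico (-k) k) close to 1
    obtain ⟨k, hk1, hk⟩ : ∃ k : ℕ, 1 ≤ k ∧
        1 - n * ε' < (H (Set.Ico (-(k:ℝ)) k)).toReal := by
      have hmono : Monotone (fun k : ℕ => Set.Ico (-(k:ℝ)) k) := by
        intro a b hab
        apply Set.Ico_subset_Ico <;> [skip; exact_mod_cast hab]
        simp only [neg_le_neg_iff]; exact_mod_cast hab
      have hunion : (⋃ k : ℕ, Set.Ico (-(k:ℝ)) k) = Set.univ := by
        ext t; simp only [Set.mem_iUnion, Set.mem_univ, iff_true, Set.mem_Ico]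
        obtain ⟨k, hk⟩ := exists_nat_gt |t|
        obtain ⟨hl, hr⟩ := abs_lt.mp hk
        exact ⟨k, by linarith, hr⟩
      have htend : Tendsto (fun k : ℕ => H (Set.Ico (-(k:ℝ)) k)) atTop
          (nhds (H Set.univ)) := by
        have := MeasureTheory.tendsto_measure_iUnion_atTop (μ := H) hmono
        rwa [hunion] at this
      rw [measure_univ] at htend
      have htr : Tendsto (fun k : ℕ => (H (Set.Ico (-(k:ℝ)) k)).toReal) atTop
          (nhds 1) := by
        have := (ENNReal.tendsto_toReal (by norm_num)).comp htend
        exact this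
      have hlt : (1 : ℝ) - n * ε' < 1 := by nlinarith
      have hev := htr.eventually (eventually_gt_nhds hlt)
      obtain ⟨k, hk1, hk2⟩ := (hev.and (eventually_ge_atTop 1)).exists
      exact ⟨k, hk2, hk1⟩
    set a : ℝ := -(k:ℝ)
    set b : ℝ := (k:ℝ)
    have hab : a < b := by
      have : (1:ℝ) ≤ k := by exact_mod_cast hk1
      simp only [a, b]; linarith
    set i0 : Fin n := ⟨0, hn⟩
    set x : Fin n → ℝ := fun _ => a
    set x' : Fin n → ℝ := Function.update x i0 b
    have hham : hammingDist x x' = 1 := by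
      unfold hammingDist
      have : (Finset.univ.filter fun i => x i ≠ x' i) = {i0} := by
        ext i
        simp only [Finset.mem_filter, Finset.mem_univ, true_and, Finset.mem_singleton]
        by_cases hi : i = i0
        · subst hi; simp [x, x', Function.update_self, hab.ne]
        · simp [x, x', Function.update_of_ne hi, hi]
      rw [this, Finset.card_singleton]
    refine ⟨x, x', hham, ?_⟩
    have hpt : ∀ t, |ecdf x t - ecdf x' t| =
        (Set.Ico a b).indicator (fun _ => 1 / (n:ℝ)) t := by
      intro t
      unfold ecdf
      by_cases h1 : a ≤ t
      · by_cases h2 : t < b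
        · have hAx : (Finset.univ.filter fun i => x i ≤ t) = Finset.univ := by
            ext i; simp [x, h1]
          have hAx' : (Finset.univ.filter fun i => x' i ≤ t) = Finset.univ \ {i0} := by
            ext i
            simp only [Finset.mem_filter, Finset.mem_univ, true_and, Finset.mem_sdiff,
              Finset.mem_singleton]
            by_cases hi : i = i0
            · subst hi; simp [x', Function.update_self, not_le.mpr h2]
            · simp [x', x, Function.update_of_ne hi, h1, hi]
          rw [hAx, hAx', Set.indicator_of_mem (Set.mem_Ico.mpr ⟨h1, h2⟩)]
          rw [Finset.card_sdiff_of_subset (by simp), Finset.card_singleton, Finset.card_univ,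
            Fintype.card_fin, Nat.cast_sub hn, Nat.cast_one, div_self hnR.ne']
          rw [show (1:ℝ) - ((n:ℝ)-1)/(n:ℝ) = 1/n by field_simp; ring]
          exact abs_of_pos (by positivity)
        · push_neg at h2
          have hAx : (Finset.univ.filter fun i => x i ≤ t) = Finset.univ := by
            ext i; simp [x, h1]
          have hAx' : (Finset.univ.filter fun i => x' i ≤ t) = Finset.univ := by
            ext i
            by_cases hi : i = i0
            · subst hi; simp [x', Function.update_self, h2]
            · simp [x', x, Function.update_of_ne hi, h1]
          rw [hAx, hAx', Set.indicator_of_notMem (by simp [Set.mem_Ico]; intro; linarith)]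
          simp
      · push_neg at h1
        have hAx : (Finset.univ.filter fun i => x i ≤ t) = ∅ := by
          ext i; simp [x, not_le.mpr h1]
        have hAx' : (Finset.univ.filter fun i => x' i ≤ t) = ∅ := by
          ext i
          by_cases hi : i = i0
          · subst hi; simp [x', Function.update_self]; linarith
          · simp [x', x, Function.update_of_ne hi, not_le.mpr h1]
        rw [hAx, hAx', Set.indicator_of_notMem (by simp [Set.mem_Ico]; intro h; linarith)]
        simp
    calc ∫ t, |ecdf x t - ecdf x' t| ∂H
        = ∫ t, (Set.Ico a b).indicator (fun _ => 1 / (n:ℝ)) t ∂H := by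
          congr 1; funext t; exact hpt t
      _ = (H (Set.Ico a b)).toReal * (1 / n) := by
          rw [integral_indicator_const _ measurableSet_Ico]; simp [smul_eq_mul, Measure.real]
      _ ≥ 1 / (n:ℝ) - ε' := by
          rw [ge_iff_le, mul_one_div,
            show 1/(n:ℝ) - ε' = (1 - n*ε')/n by field_simp]
          gcongr

  -- upper bound: every achievable distance is at most 1/n
  have hub : ∀ d ∈ {d : ℝ | ∃ x x' : Fin n → ℝ, hammingDist x x' ≤ 1 ∧
      d = dW H (ecdf x) (ecdf x')}, d ≤ 1 / n := by
    rintro d ⟨x, x', hham, rfl⟩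
    unfold dW
    calc ∫ t, |ecdf x t - ecdf x' t| ∂H
        ≤ ∫ _, 1 / (n:ℝ) ∂H := by
          apply integral_mono_of_nonneg (Filter.Eventually.of_forall fun t => abs_nonneg _)
            (integrable_const _)
            (Filter.Eventually.of_forall (abs_ecdf_sub_le x x' hham))
      _ = 1 / n := by simp
  have hS0 : (0:ℝ) ∈ {d : ℝ | ∃ x x' : Fin n → ℝ, hammingDist x x' ≤ 1 ∧
      d = dW H (ecdf x) (ecdf x')} := by
    refine ⟨fun _ => 0, fun _ => 0, by simp [hammingDist_self], ?_⟩
    simp [dW]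
  have hbdd : BddAbove {d : ℝ | ∃ x x' : Fin n → ℝ, hammingDist x x' ≤ 1 ∧
      d = dW H (ecdf x) (ecdf x')} := ⟨1 / n, hub⟩
  refine ⟨main ε hε, le_antisymm (csSup_le ⟨0, hS0⟩ hub) ?_⟩
  apply le_of_forall_sub_le
  intro δ hδ
  obtain ⟨x, x', hham, hge⟩ := main δ hδ
  calc 1 / (n:ℝ) - δ ≤ dW H (ecdf x) (ecdf x') := hge
    _ ≤ _ := le_csSup hbdd ⟨x, x', hham.le, rfl⟩
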